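/- Let κ < 0, λ > 0 and let n ≥ 1 be an integer. If u₁ and u₂ are both S⁺ₙ-solutions of problem (P) for the same parameters (κ, λ), then u₁(x) = u₂(x) for all x ∈ [0,1]. -/

import Mathlib

open Set Real Filter

noncomputable section
set_option maxHeartbeats 1000000
open Topology intervalIntegral MeasureTheory

/-- `u` is twice continuously differentiable on `[a,b]`, satisfies
`1 + κ (u')² > 0` and the ODE `-u'' = λ u (1 + κ (u')²)^(3/2)` on `[a,b]`. -/
def SolODE (κ lam : ℝ) (u : ℝ → ℝ) (a b : ℝ) : Prop :=
  (∀ x ∈ Set.Icc a b, DifferentiableAt ℝ u x) ∧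
  (∀ x ∈ Set.Icc a b, DifferentiableAt ℝ (deriv u) x) ∧
  ContinuousOn (deriv (deriv u)) (Set.Icc a b) ∧
  (∀ x ∈ Set.Icc a b, 0 < 1 + κ * (deriv u x) ^ 2) ∧
  (∀ x ∈ Set.Icc a b,
    -(deriv (deriv u) x) = lam * u x * (1 + κ * (deriv u x) ^ 2) ^ ((3 : ℝ) / 2))

/-- `u` is a solution of problem (P) on `[0,1]` with Dirichlet boundary conditions. -/
def SolP (κ lam : ℝ) (u : ℝ → ℝ) : Prop :=
  SolODE κ lam u 0 1 ∧ u 0 = 0 ∧ u 1 = 0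

/-- `u` is an `S⁺ₙ`-solution of problem (P): a nontrivial solution with exactly
`n - 1` zeros in `(0,1)`, all zeros in `[0,1]` simple, and positive near `0`. -/
def SPlus (κ lam : ℝ) (n : ℕ) (u : ℝ → ℝ) : Prop :=
  SolP κ lam u ∧
  (∃ x ∈ Set.Icc (0 : ℝ) 1, u x ≠ 0) ∧
  {x ∈ Set.Ioo (0 : ℝ) 1 | u x = 0}.ncard = n - 1 ∧
  (∀ τ ∈ Set.Icc (0 : ℝ) 1, u τ = 0 → deriv u τ ≠ 0) ∧
  (∃ δ > 0, ∀ x ∈ Set.Ioo (0 : ℝ) δ, 0 < u x)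

/-- The constant `B = ∫₀¹ dθ/√(θ⁻⁴ - 1)`. -/
def Bconst : ℝ := ∫ θ in (0 : ℝ)..1, 1 / Real.sqrt ((θ ^ 4)⁻¹ - 1)

/-- The sup-norm of `u` over `[0,1]`. -/
def supNorm (u : ℝ → ℝ) : ℝ := sSup ((fun x => |u x|) '' Set.Icc (0 : ℝ) 1)

/-- The time map `J(λ, ξ) = √(-κ) ∫₀¹ ξ/√(1 - (1 - λκξ²(1-θ²)/2)⁻²) dθ`. -/
def Jmap (κ lam ξ : ℝ) : ℝ :=
  Real.sqrt (-κ) *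
    ∫ θ in (0 : ℝ)..1,
      ξ / Real.sqrt (1 - ((1 - lam * κ / 2 * ξ ^ 2 * (1 - θ ^ 2))⁻¹) ^ 2)

/-- vector field for the first-order system -/
def vf (κ lam : ℝ) : ℝ × ℝ → ℝ × ℝ :=
  fun p => (p.2, -(lam * p.1 * (1 + κ * p.2 ^ 2) ^ ((3 : ℝ) / 2)))

lemma g_bounds {κ : ℝ} (hκ : κ < 0) {m v : ℝ} (hm : 0 < 1 + κ * m ^ 2)
    (hv : |v| ≤ m) : 0 < 1 + κ * v ^ 2 ∧ (1 + κ * v ^ 2) ^ ((3:ℝ)/2) ≤ 1 := by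
  have h1 : v ^ 2 ≤ m ^ 2 := by nlinarith [abs_nonneg v, sq_abs v]
  have h2 : 0 < 1 + κ * v ^ 2 := by nlinarith
  refine ⟨h2, ?_⟩
  have h3 : 1 + κ * v ^ 2 ≤ 1 := by nlinarith [sq_nonneg v]
  exact Real.rpow_le_one h2.le h3 (by norm_num)

lemma g_lip {κ : ℝ} (hκ : κ < 0) {m : ℝ} (hm : 0 < 1 + κ * m ^ 2) {v w : ℝ}
    (hv : |v| ≤ m) (hw : |w| ≤ m) :
    |(1 + κ * v ^ 2) ^ ((3:ℝ)/2) - (1 + κ * w ^ 2) ^ ((3:ℝ)/2)| ≤ 3 * (-κ) * m * |v - w| := by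
  have hm0 : 0 ≤ m := le_trans (abs_nonneg v) hv
  set s : Set ℝ := Icc (-m) m with hs
  have hconv : Convex ℝ s := convex_Icc _ _
  have key : ∀ x ∈ s, HasDerivWithinAt (fun y => (1 + κ * y ^ 2) ^ ((3:ℝ)/2))
      ((κ * (2 * x)) * ((3:ℝ)/2) * (1 + κ * x ^ 2) ^ ((3:ℝ)/2 - 1)) s x := by
    intro x hx
    have hx' : |x| ≤ m := abs_le.2 hx
    have hpos := (g_bounds hκ hm hx').1
    have h1 : HasDerivWithinAt (fun y : ℝ => 1 + κ * y ^ 2) (κ * (2 * x)) s x := by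
      simpa using (((hasDerivAt_pow 2 x)).const_mul κ).const_add (1:ℝ) |>.hasDerivWithinAt
    exact h1.rpow_const (Or.inl hpos.ne')
  have bound : ∀ x ∈ s, ‖(κ * (2 * x)) * ((3:ℝ)/2) * (1 + κ * x ^ 2) ^ ((3:ℝ)/2 - 1)‖
      ≤ 3 * (-κ) * m := by
    intro x hx
    have hx' : |x| ≤ m := abs_le.2 hx
    have hpos := (g_bounds hκ hm hx').1
    have h3 : 1 + κ * x ^ 2 ≤ 1 := by nlinarith [sq_nonneg x]
    have hr : (1 + κ * x ^ 2) ^ ((3:ℝ)/2 - 1) ≤ 1 :=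
      Real.rpow_le_one hpos.le h3 (by norm_num)
    have hr0 : 0 ≤ (1 + κ * x ^ 2) ^ ((3:ℝ)/2 - 1) := Real.rpow_nonneg hpos.le _
    have : ‖(κ * (2 * x)) * ((3:ℝ)/2) * (1 + κ * x ^ 2) ^ ((3:ℝ)/2 - 1)‖
        = (|κ| * (2 * |x|)) * ((3:ℝ)/2) * (1 + κ * x ^ 2) ^ ((3:ℝ)/2 - 1) := by
      rw [Real.norm_eq_abs, abs_mul, abs_mul, abs_mul]
      rw [abs_of_nonneg hr0, abs_of_nonneg (by norm_num : (0:ℝ) ≤ (3:ℝ)/2), abs_mul, abs_two]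
    rw [this]
    have hκ' : |κ| = -κ := abs_of_neg hκ
    rw [hκ']
    have h6 : |x| * ((1 + κ * x ^ 2) ^ ((3:ℝ)/2 - 1)) ≤ m * 1 := mul_le_mul hx' hr hr0 hm0
    nlinarith [abs_nonneg x, neg_pos.2 hκ, h6]
  have := Convex.norm_image_sub_le_of_norm_hasDerivWithin_le key bound hconv
    (abs_le.1 hw) (abs_le.1 hv)
  simpa [Real.norm_eq_abs] using this

lemma vf_lipschitz {κ lam : ℝ} (hκ : κ < 0) (hlam : 0 < lam) {M m : ℝ}
    (hM : 0 ≤ M) (hm : 0 < 1 + κ * m ^ 2) :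
    LipschitzOnWith (Real.toNNReal (1 + lam * (1 + 3 * (-κ) * M * m))) (vf κ lam)
      (Icc (-M) M ×ˢ Icc (-m) m) := by
  rw [lipschitzOnWith_iff_dist_le_mul]
  intro p hp q hq
  obtain ⟨hp1, hp2⟩ := hp
  obtain ⟨hq1, hq2⟩ := hq
  simp only [mem_Icc] at hp1 hp2 hq1 hq2
  have hp1' : |p.1| ≤ M := abs_le.2 hp1
  have hp2' : |p.2| ≤ m := abs_le.2 hp2
  have hq1' : |q.1| ≤ M := abs_le.2 hq1
  have hq2' : |q.2| ≤ m := abs_le.2 hq2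
  have hm0 : 0 ≤ m := le_trans (abs_nonneg p.2) hp2'
  set K : ℝ := 1 + lam * (1 + 3 * (-κ) * M * m) with hK
  have h7 : 0 ≤ 3 * (-κ) * M * m := by
    apply mul_nonneg (mul_nonneg (by linarith) hM) hm0
  have hK0 : 0 ≤ K := by nlinarith [mul_nonneg hlam.le (by linarith : (0:ℝ) ≤ 1 + 3 * (-κ) * M * m)]
  have hK1 : 1 ≤ K := by nlinarith [mul_nonneg hlam.le (by linarith : (0:ℝ) ≤ 1 + 3 * (-κ) * M * m)]
  have hco : (Real.toNNReal K : ℝ) = K := Real.coe_toNNReal _ hK0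
  simp only [Prod.dist_eq]
  rw [hco]
  set D : ℝ := max (dist p.1 q.1) (dist p.2 q.2) with hDdef
  have hD1 : dist p.1 q.1 ≤ D := le_max_left _ _
  have hD2 : dist p.2 q.2 ≤ D := le_max_right _ _
  have hD0 : 0 ≤ D := le_trans dist_nonneg hD1
  have hfst : dist (vf κ lam p).1 (vf κ lam q).1 ≤ K * D := by
    simp only [vf]
    calc dist p.2 q.2 ≤ D := hD2
    _ ≤ K * D := by nlinarith [mul_le_mul_of_nonneg_right hK1 hD0]
  have hsnd : dist (vf κ lam p).2 (vf κ lam q).2 ≤ K * D := by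
    simp only [vf, Real.dist_eq]
    set A := (1 + κ * p.2 ^ 2) ^ ((3:ℝ)/2) with hA
    set B := (1 + κ * q.2 ^ 2) ^ ((3:ℝ)/2) with hB
    have e1 : |A| ≤ 1 := by
      have := (g_bounds hκ hm hp2')
      rw [hA, abs_of_nonneg (Real.rpow_nonneg this.1.le _)]; exact this.2
    have e2 : |A - B| ≤ 3 * (-κ) * m * |p.2 - q.2| := g_lip hκ hm hp2' hq2'
    have e3 : |p.1 - q.1| ≤ D := by rwa [Real.dist_eq] at hD1
    have e4 : |p.2 - q.2| ≤ D := by rwa [Real.dist_eq] at hD2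
    have key : -(lam * p.1 * A) - -(lam * q.1 * B)
        = -(lam * ((p.1 - q.1) * A) + lam * (q.1 * (A - B))) := by ring
    rw [key, abs_neg]
    have b1 : |lam * ((p.1 - q.1) * A)| ≤ lam * D := by
      rw [abs_mul, abs_mul, abs_of_pos hlam]
      have h8 : |p.1 - q.1| * |A| ≤ D * 1 := mul_le_mul e3 e1 (abs_nonneg _) hD0
      nlinarith
    have b2 : |lam * (q.1 * (A - B))| ≤ lam * (M * (3 * (-κ) * m * D)) := by
      rw [abs_mul, abs_mul, abs_of_pos hlam]
      have h5 : |A - B| ≤ 3 * (-κ) * m * D := by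
        refine e2.trans ?_
        apply mul_le_mul_of_nonneg_left e4
        apply mul_nonneg (mul_nonneg (by linarith) (by linarith)) hm0
      have h9 := mul_le_mul hq1' h5 (abs_nonneg _) hM
      nlinarith [abs_nonneg q.1]
    calc |lam * ((p.1 - q.1) * A) + lam * (q.1 * (A - B))|
        ≤ |lam * ((p.1 - q.1) * A)| + |lam * (q.1 * (A - B))| := abs_add_le _ _
      _ ≤ lam * D + lam * (M * (3 * (-κ) * m * D)) := add_le_add b1 b2
      _ ≤ K * D := by nlinarith [mul_le_mul_of_nonneg_right hK1 hD0, mul_pos hlam (lt_of_lt_of_le zero_lt_one hK1)]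
  exact max_le hfst hsnd


/-- Uniqueness for the first-order system: two solutions staying in a good region
that agree at a point of `[a,b]` agree on `[a,b]`. -/
lemma ode_uniq {κ lam : ℝ} (hκ : κ < 0) (hlam : 0 < lam) {M m a b t₀ : ℝ}
    (hM : 0 ≤ M) (hm : 0 < 1 + κ * m ^ 2) (ht₀ : t₀ ∈ Icc a b)
    {P Q : ℝ → ℝ × ℝ}
    (hP : ∀ x ∈ Icc a b, HasDerivAt P (vf κ lam (P x)) x)
    (hQ : ∀ x ∈ Icc a b, HasDerivAt Q (vf κ lam (Q x)) x)
    (hPs : ∀ x ∈ Icc a b, P x ∈ Icc (-M) M ×ˢ Icc (-m) m)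
    (hQs : ∀ x ∈ Icc a b, Q x ∈ Icc (-M) M ×ˢ Icc (-m) m)
    (heq : P t₀ = Q t₀) : EqOn P Q (Icc a b) := by
  have hab : a ≤ b := le_trans ht₀.1 ht₀.2
  have hv : ∀ _t : ℝ, LipschitzOnWith (Real.toNNReal (1 + lam * (1 + 3 * (-κ) * M * m)))
      ((fun (_t : ℝ) (p : ℝ × ℝ) => vf κ lam p) _t) (Icc (-M) M ×ˢ Icc (-m) m) :=
    fun _ => vf_lipschitz hκ hlam hM hm
  have hPc : ContinuousOn P (Icc a b) := fun x hx => ((hP x hx).continuousAt).continuousWithinAt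
  have hQc : ContinuousOn Q (Icc a b) := fun x hx => ((hQ x hx).continuousAt).continuousWithinAt
  have left : EqOn P Q (Icc a t₀) := by
    apply ODE_solution_unique_of_mem_Icc_left (fun t _ => hv t)
      (hPc.mono (Icc_subset_Icc_right ht₀.2))
      (fun t ht => (hP t ⟨le_of_lt ht.1, le_trans ht.2 ht₀.2⟩).hasDerivWithinAt)
      (fun t ht => hPs t ⟨le_of_lt ht.1, le_trans ht.2 ht₀.2⟩)
      (hQc.mono (Icc_subset_Icc_right ht₀.2))
      (fun t ht => (hQ t ⟨le_of_lt ht.1, le_trans ht.2 ht₀.2⟩).hasDerivWithinAt)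
      (fun t ht => hQs t ⟨le_of_lt ht.1, le_trans ht.2 ht₀.2⟩)
      heq
  have right : EqOn P Q (Icc t₀ b) := by
    apply ODE_solution_unique_of_mem_Icc_right (fun t _ => hv t)
      (hPc.mono (Icc_subset_Icc_left ht₀.1))
      (fun t ht => (hP t ⟨le_trans ht₀.1 ht.1, le_of_lt ht.2⟩).hasDerivWithinAt)
      (fun t ht => hPs t ⟨le_trans ht₀.1 ht.1, le_of_lt ht.2⟩)
      (hQc.mono (Icc_subset_Icc_left ht₀.1))
      (fun t ht => (hQ t ⟨le_trans ht₀.1 ht.1, le_of_lt ht.2⟩).hasDerivWithinAt)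
      (fun t ht => hQs t ⟨le_trans ht₀.1 ht.1, le_of_lt ht.2⟩)
      heq
  intro x hx
  rcases le_total x t₀ with h | h
  · exact left ⟨hx.1, h⟩
  · exact right ⟨h, hx.2⟩


/-- The conserved energy. -/
def En (κ lam : ℝ) (u : ℝ → ℝ) (x : ℝ) : ℝ :=
  (1 + κ * (deriv u x) ^ 2) ^ (-(1 : ℝ) / 2) - κ * lam / 2 * (u x) ^ 2

lemma energy_const {κ lam : ℝ} {u : ℝ → ℝ} (hu : SolODE κ lam u 0 1) :
    ∀ x ∈ Icc (0:ℝ) 1, En κ lam u x = En κ lam u 0 := by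
  obtain ⟨hd1, hd2, _hc2, hpos, hODE⟩ := hu
  have hderiv : ∀ x ∈ Icc (0:ℝ) 1, HasDerivAt (En κ lam u) 0 x := by
    intro x hx
    have hux : HasDerivAt u (deriv u x) x := (hd1 x hx).hasDerivAt
    have hvx : HasDerivAt (deriv u) (deriv (deriv u) x) x := (hd2 x hx).hasDerivAt
    set v := deriv u x with hv
    set w := deriv (deriv u) x with hw
    set B := 1 + κ * v ^ 2 with hB
    have hBpos : 0 < B := hpos x hx
    have h1 : HasDerivAt (fun y => 1 + κ * (deriv u y) ^ 2) (κ * (2 * v * w)) x := by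
      have := ((hvx.pow 2).const_mul κ).const_add (1:ℝ)
      simpa [mul_comm, mul_assoc, mul_left_comm] using this
    have h2 : HasDerivAt (fun y => (1 + κ * (deriv u y) ^ 2) ^ (-(1:ℝ)/2))
        ((κ * (2 * v * w)) * (-(1:ℝ)/2) * B ^ (-(1:ℝ)/2 - 1)) x :=
      h1.rpow_const (Or.inl hBpos.ne')
    have h3 : HasDerivAt (fun y => κ * lam / 2 * (u y) ^ 2) (κ * lam / 2 * (2 * u x * deriv u x)) x := by
      have := (hux.pow 2).const_mul (κ * lam / 2)
      simpa [mul_comm, mul_assoc, mul_left_comm] using this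
    have h4 := h2.sub h3
    have hwv : w = -(lam * u x * B ^ ((3:ℝ)/2)) := by
      have := hODE x hx
      rw [← hv, ← hw, ← hB] at this
      linarith
    have halg : (κ * (2 * v * w)) * (-(1:ℝ)/2) * B ^ (-(1:ℝ)/2 - 1)
        - κ * lam / 2 * (2 * u x * v) = 0 := by
      rw [hwv]
      have hBmul : B ^ ((3:ℝ)/2) * B ^ (-(1:ℝ)/2 - 1) = 1 := by
        rw [← Real.rpow_add hBpos]
        norm_num
      have : κ * (2 * v * -(lam * u x * B ^ ((3:ℝ)/2))) * (-(1:ℝ)/2) * B ^ (-(1:ℝ)/2 - 1)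
          = κ * lam * u x * v * (B ^ ((3:ℝ)/2) * B ^ (-(1:ℝ)/2 - 1)) := by ring
      rw [this, hBmul]
      ring
    rw [halg] at h4
    exact h4
  have hcont : ContinuousOn (En κ lam u) (Icc (0:ℝ) 1) :=
    fun x hx => ((hderiv x hx).continuousAt).continuousWithinAt
  exact constant_of_has_deriv_right_zero hcont
    (fun x hx => (hderiv x (Ico_subset_Icc_self hx)).hasDerivWithinAt)


/-- positive right-derivative at a simple zero with positivity to the right -/
lemma deriv_pos_at_zero {u : ℝ → ℝ} {c δ : ℝ} (hc : HasDerivAt u c 0) (hne : c ≠ 0)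
    (h0 : u 0 = 0) (hδ : 0 < δ) (hpos : ∀ x ∈ Ioo (0:ℝ) δ, 0 < u x) : 0 < c := by
  rcases lt_or_gt_of_ne hne with h | h
  · exfalso
    have hslope := hasDerivAt_iff_tendsto_slope.1 hc
    have hslope' : Tendsto (slope u 0) (𝓝[>] 0) (𝓝 c) :=
      hslope.mono_left (nhdsWithin_mono 0 (fun x hx => ne_of_gt hx))
    have hev : ∀ᶠ x in 𝓝[>] (0:ℝ), 0 ≤ slope u 0 x := by
      filter_upwards [Ioo_mem_nhdsGT_of_mem (by exact ⟨le_refl 0, hδ⟩ : (0:ℝ) ∈ Ico 0 δ)]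
        with x hx
      have hux := hpos x hx
      have hx0 : 0 < x := hx.1
      rw [slope_def_field, h0]
      exact div_nonneg (by linarith) (by linarith)
    have : 0 ≤ c := ge_of_tendsto hslope' hev
    linarith
  · exact h

/-- The polynomial form of the energy relation. -/
lemma energy_rel {κ lam : ℝ} {u : ℝ → ℝ} (hκ : κ < 0) (hu : SolODE κ lam u 0 1)
    (h0 : u 0 = 0) :
    ∀ x ∈ Icc (0:ℝ) 1,
      0 < En κ lam u 0 + κ * lam / 2 * (u x) ^ 2 ∧
      (1 + κ * (deriv u x) ^ 2) * (En κ lam u 0 + κ * lam / 2 * (u x) ^ 2) ^ 2 = 1 := by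
  intro x hx
  have hpos := hu.2.2.2.1 x hx
  have hE := energy_const hu x hx
  have hEx : (1 + κ * (deriv u x) ^ 2) ^ (-(1 : ℝ) / 2)
      = En κ lam u 0 + κ * lam / 2 * (u x) ^ 2 := by
    rw [← hE]; unfold En; ring
  have hH : 0 < En κ lam u 0 + κ * lam / 2 * (u x) ^ 2 := by
    rw [← hEx]; exact Real.rpow_pos_of_pos hpos _
  refine ⟨hH, ?_⟩
  have hsq : ((1 + κ * (deriv u x) ^ 2) ^ (-(1 : ℝ) / 2)) ^ 2
      = (1 + κ * (deriv u x) ^ 2) ^ (-(1:ℝ)) := by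
    rw [← Real.rpow_natCast ((1 + κ * (deriv u x) ^ 2) ^ (-(1 : ℝ) / 2)) 2,
      ← Real.rpow_mul hpos.le]
    norm_num
  rw [← hEx, hsq, Real.rpow_neg_one]
  field_simp
lemma en_zero {κ lam : ℝ} {u : ℝ → ℝ} (h0 : u 0 = 0) :
    En κ lam u 0 = (1 + κ * (deriv u 0) ^ 2) ^ (-(1 : ℝ) / 2) := by
  unfold En; rw [h0]; ring

lemma en_gt_one {κ lam : ℝ} {u : ℝ → ℝ} (hκ : κ < 0) (h0 : u 0 = 0)
    (hpos : 0 < 1 + κ * (deriv u 0) ^ 2) (hne : deriv u 0 ≠ 0) : 1 < En κ lam u 0 := by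
  rw [en_zero h0]
  have h1 : 1 + κ * (deriv u 0) ^ 2 < 1 := by nlinarith [sq_nonneg (deriv u 0), lt_of_le_of_ne (sq_nonneg (deriv u 0)) (Ne.symm (pow_ne_zero 2 hne))]
  rw [Real.one_lt_rpow_iff_of_pos hpos]
  right; exact ⟨h1, by norm_num⟩

lemma curve_hasDeriv {κ lam : ℝ} {u : ℝ → ℝ} (hu : SolODE κ lam u 0 1) :
    ∀ x ∈ Icc (0:ℝ) 1, HasDerivAt (fun t => (u t, deriv u t))
      (vf κ lam ((u x, deriv u x))) x := by
  intro x hx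
  have h1 : HasDerivAt u (deriv u x) x := (hu.1 x hx).hasDerivAt
  have h2 : HasDerivAt (deriv u) (deriv (deriv u) x) x := (hu.2.1 x hx).hasDerivAt
  have hODE := hu.2.2.2.2 x hx
  have : deriv (deriv u) x = -(lam * u x * (1 + κ * (deriv u x) ^ 2) ^ ((3:ℝ)/2)) := by
    linarith
  rw [this] at h2
  exact h1.prodMk h2

/-- reflected curve solves the system -/
lemma curve_refl_hasDeriv {κ lam : ℝ} {u : ℝ → ℝ} (hu : SolODE κ lam u 0 1) {c x : ℝ}
    (hx : 2 * c - x ∈ Icc (0:ℝ) 1) :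
    HasDerivAt (fun t => (u (2 * c - t), -deriv u (2 * c - t)))
      (vf κ lam ((u (2 * c - x), -deriv u (2 * c - x)))) x := by
  have hin : HasDerivAt (fun t : ℝ => 2 * c - t) (-1) x := by
    simpa using (hasDerivAt_id' x).const_sub (2 * c)
  have h1 : HasDerivAt u (deriv u (2 * c - x)) (2 * c - x) := (hu.1 _ hx).hasDerivAt
  have h2 : HasDerivAt (deriv u) (deriv (deriv u) (2 * c - x)) (2 * c - x) :=
    (hu.2.1 _ hx).hasDerivAt
  have hODE := hu.2.2.2.2 _ hx
  have hc1 : HasDerivAt (fun t => u (2 * c - t)) (-deriv u (2 * c - x)) x := by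
    have := h1.comp x hin
    simpa [mul_comm, Function.comp_def] using this
  have hc2 : HasDerivAt (fun t => -deriv u (2 * c - t)) (deriv (deriv u) (2 * c - x)) x := by
    have := (h2.comp x hin).neg
    simpa [mul_comm, Function.comp_def, Pi.neg_def] using this
  have heq : deriv (deriv u) (2 * c - x)
      = -(lam * u (2 * c - x) * (1 + κ * (-deriv u (2 * c - x)) ^ 2) ^ ((3:ℝ)/2)) := by
    have hsq : (-deriv u (2 * c - x)) ^ 2 = (deriv u (2 * c - x)) ^ 2 := by ring
    rw [hsq]
    linarith
  rw [heq] at hc2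
  simp only [vf]
  exact hc1.prodMk hc2

/-- translated-negated curve solves the system -/
lemma curve_flip_hasDeriv {κ lam : ℝ} {u : ℝ → ℝ} (hu : SolODE κ lam u 0 1) {c x : ℝ}
    (hx : x - c ∈ Icc (0:ℝ) 1) :
    HasDerivAt (fun t => (-u (t - c), -deriv u (t - c)))
      (vf κ lam ((-u (x - c), -deriv u (x - c)))) x := by
  have hin : HasDerivAt (fun t : ℝ => t - c) 1 x := by
    simpa using (hasDerivAt_id x).sub_const c
  have h1 : HasDerivAt u (deriv u (x - c)) (x - c) := (hu.1 _ hx).hasDerivAt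
  have h2 : HasDerivAt (deriv u) (deriv (deriv u) (x - c)) (x - c) := (hu.2.1 _ hx).hasDerivAt
  have hODE := hu.2.2.2.2 _ hx
  have hc1 : HasDerivAt (fun t => -u (t - c)) (-deriv u (x - c)) x := by
    have := (h1.comp x hin).neg
    simpa [Function.comp_def, Pi.neg_def] using this
  have hc2 : HasDerivAt (fun t => -deriv u (t - c)) (-(deriv (deriv u) (x - c))) x := by
    have := (h2.comp x hin).neg
    simpa [Function.comp_def, Pi.neg_def] using this
  have heq : -deriv (deriv u) (x - c)
      = -(lam * (-u (x - c)) * (1 + κ * (-deriv u (x - c)) ^ 2) ^ ((3:ℝ)/2)) := by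
    have hsq : (-deriv u (x - c)) ^ 2 = (deriv u (x - c)) ^ 2 := by ring
    rw [hsq]
    linarith [hODE]
  rw [heq] at hc2
  simp only [vf]
  exact hc1.prodMk hc2


theorem structure_lemma {κ lam : ℝ} (hκ : κ < 0) (hlam : 0 < lam) {n : ℕ} (hn : 1 ≤ n)
    {u : ℝ → ℝ} (hu : SPlus κ lam n u) {M m : ℝ} (hM : 0 ≤ M) (hm : 0 < 1 + κ * m ^ 2)
    (htraj : ∀ x ∈ Icc (0:ℝ) 1, |u x| ≤ M ∧ |deriv u x| ≤ m) :
    0 < deriv u 0 ∧ 1 < En κ lam u 0 ∧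
    ∃ ξ, 0 < ξ ∧ κ * lam / 2 * ξ ^ 2 = 1 - En κ lam u 0 ∧
      u (1 / (2 * n)) = ξ ∧ StrictMonoOn u (Icc 0 (1 / (2 * n))) ∧
      (∀ x ∈ Ico (0:ℝ) (1 / (2 * (n:ℝ))), 0 < deriv u x) ∧ 1 / (2 * (n:ℝ)) ≤ 1 := by
  obtain ⟨⟨hsol, h0, h1⟩, -, hcount, hsimple, δ, hδ, hposδ⟩ := hu
  obtain ⟨hd1, hd2, hc2, hBpos, hODE⟩ := hsol
  have hsol : SolODE κ lam u 0 1 := ⟨hd1, hd2, hc2, hBpos, hODE⟩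
  have mem01 : (0:ℝ) ∈ Icc (0:ℝ) 1 := ⟨le_refl 0, zero_le_one⟩
  have mem11 : (1:ℝ) ∈ Icc (0:ℝ) 1 := ⟨zero_le_one, le_refl 1⟩
  -- continuity
  have hcu : ContinuousOn u (Icc (0:ℝ) 1) :=
    fun x hx => ((hd1 x hx).continuousAt).continuousWithinAt
  have hcv : ContinuousOn (deriv u) (Icc (0:ℝ) 1) :=
    fun x hx => ((hd2 x hx).continuousAt).continuousWithinAt
  -- positive initial slope
  set c := deriv u 0 with hcdef
  have hcne : c ≠ 0 := hsimple 0 mem01 h0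
  have hc : 0 < c := deriv_pos_at_zero ((hd1 0 mem01).hasDerivAt) hcne h0 hδ hposδ
  set C := En κ lam u 0 with hCdef
  have hC : 1 < C := en_gt_one hκ h0 (hBpos 0 mem01) hcne
  have hrel := energy_rel hκ hsol h0
  -- derivative at zeros is ±c
  have hvz : ∀ x ∈ Icc (0:ℝ) 1, u x = 0 → deriv u x = c ∨ deriv u x = -c := by
    intro x hx hux
    have hx0 := (hrel 0 mem01).2
    have hxx := (hrel x hx).2
    rw [hux] at hxx
    rw [h0] at hx0
    have : (deriv u x) ^ 2 = c ^ 2 := by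
      rw [← hcdef] at hx0
      have hCne : (C + κ * lam / 2 * 0 ^ 2) ^ 2 ≠ 0 := by
        have := (hrel 0 mem01).1
        rw [h0] at this
        positivity
      have h5 : (1 + κ * (deriv u x) ^ 2) = (1 + κ * c ^ 2) := by
        have := mul_right_cancel₀ hCne (hxx.trans hx0.symm)
        exact this
      have : κ * (deriv u x) ^ 2 = κ * c ^ 2 := by linarith
      exact mul_left_cancel₀ (ne_of_lt hκ) this
    have h6 : (deriv u x - c) * (deriv u x + c) = 0 := by nlinarith [this]
    rcases mul_eq_zero.1 h6 with h7 | h7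
    · left; linarith
    · right; linarith
  -- at critical points, u² = ξ²  (κ lam/2 u² = 1 - C)
  have hcrit : ∀ x ∈ Icc (0:ℝ) 1, deriv u x = 0 → κ * lam / 2 * (u x) ^ 2 = 1 - C := by
    intro x hx hvx
    have hxx := (hrel x hx).2
    have hHpos := (hrel x hx).1
    rw [hvx] at hxx
    rw [← hCdef] at hxx hHpos
    norm_num at hxx
    rcases hxx with h7 | h7
    · linarith
    · linarith
  -- the first zero z
  have hδ1 : 0 < min δ 1 := lt_min hδ zero_lt_one
  set S : Set ℝ := Icc (min δ 1) 1 ∩ u ⁻¹' {0} with hSdef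
  have hSclosed : IsClosed S :=
    ContinuousOn.preimage_isClosed_of_isClosed
      (hcu.mono (Icc_subset_Icc hδ1.le (le_refl 1))) isClosed_Icc isClosed_singleton
  -- every zero in (0,1] lies in S
  have hzS : ∀ x, 0 < x → x ≤ 1 → u x = 0 → x ∈ S := by
    intro x hx0 hx1 hux
    by_contra hxS
    have hxlt : x < min δ 1 := by
      by_contra hge
      exact hxS ⟨⟨le_of_not_gt hge, hx1⟩, hux⟩
    have hxδ : x < δ := lt_of_lt_of_le hxlt (min_le_left _ _)
    have := hposδ x ⟨hx0, hxδ⟩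
    rw [hux] at this
    exact lt_irrefl 0 this
  have hSne : S.Nonempty := ⟨1, hzS 1 zero_lt_one (le_refl 1) h1⟩
  have hSbdd : BddBelow S := ⟨min δ 1, fun x hx => hx.1.1⟩
  set z := sInf S with hzdef
  have hzS' : z ∈ S := hSclosed.csInf_mem hSne hSbdd
  have hz0 : 0 < z := lt_of_lt_of_le hδ1 hzS'.1.1
  have hz1 : z ≤ 1 := hzS'.1.2
  have hzu : u z = 0 := hzS'.2
  have hzmin : ∀ x, 0 < x → x < z → u x ≠ 0 := by
    intro x hx0 hxz hux
    have hx1 : x ≤ 1 := le_trans (le_of_lt hxz) hz1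
    have := csInf_le hSbdd (hzS x hx0 hx1 hux)
    rw [← hzdef] at this
    linarith
  -- u > 0 on (0, z)
  have hupos : ∀ x ∈ Ioo 0 z, 0 < u x := by
    intro x hx
    rcases lt_trichotomy (u x) 0 with hneg | hz' | hp
    · exfalso
      set x' := min x (min δ 1) / 2 with hx'def
      have hx'0 : 0 < x' := by
        have := lt_min hx.1 hδ1
        positivity
      have hx'x : x' < x := by
        have h8 : x' ≤ x / 2 := by
          apply div_le_div_of_nonneg_right (min_le_left _ _)
          norm_num
        linarith [hx.1]
      have hx'δ : x' < δ := by
        have h8 : x' ≤ min δ 1 / 2 := by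
          apply div_le_div_of_nonneg_right (min_le_right _ _)
          norm_num
        have := min_le_left δ 1
        linarith [hδ1]
      have hux' : 0 < u x' := hposδ x' ⟨hx'0, hx'δ⟩
      have hIcc : Icc x' x ⊆ Icc (0:ℝ) 1 :=
        Icc_subset_Icc (le_of_lt hx'0) (le_trans (le_of_lt hx.2) hz1)
      have := intermediate_value_Icc' (le_of_lt hx'x) (hcu.mono hIcc)
      have h9 : (0:ℝ) ∈ Icc (u x) (u x') := ⟨le_of_lt hneg, le_of_lt hux'⟩
      obtain ⟨y, hy, huy⟩ := this h9
      have hy0 : 0 < y := lt_of_lt_of_le hx'0 hy.1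
      have hyz : y < z := lt_of_le_of_lt hy.2 hx.2
      exact hzmin y hy0 hyz huy
    · exact absurd hz' (hzmin x hx.1 hx.2)
    · exact hp
  -- u'' < 0 where u > 0
  have hconc : ∀ x ∈ Ioo 0 z, deriv (deriv u) x < 0 := by
    intro x hx
    have hx01 : x ∈ Icc (0:ℝ) 1 := ⟨le_of_lt hx.1, le_trans (le_of_lt hx.2) hz1⟩
    have hODEx := hODE x hx01
    have hux := hupos x hx
    have hrp : 0 < (1 + κ * (deriv u x) ^ 2) ^ ((3:ℝ)/2) :=
      Real.rpow_pos_of_pos (hBpos x hx01) _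
    nlinarith [mul_pos (mul_pos hlam hux) hrp]
  -- u' strictly decreasing on [0, z]
  have hanti : StrictAntiOn (deriv u) (Icc 0 z) := by
    apply strictAntiOn_of_deriv_neg (convex_Icc 0 z)
      (hcv.mono (Icc_subset_Icc (le_refl 0) hz1))
    intro x hx
    rw [interior_Icc] at hx
    exact hconc x hx
  -- u'(z) = -c
  have hvzneg : deriv u z = -c := by
    have hz01 : z ∈ Icc (0:ℝ) 1 := ⟨le_of_lt hz0, hz1⟩
    rcases hvz z hz01 hzu with h7 | h7
    · exfalso
      have := hanti ⟨le_refl 0, le_of_lt hz0⟩ ⟨le_of_lt hz0, le_refl z⟩ hz0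
      rw [h7, ← hcdef] at this
      exact lt_irrefl c this
    · exact h7
  -- the critical point T'
  have hccz : ContinuousOn (deriv u) (Icc 0 z) := hcv.mono (Icc_subset_Icc (le_refl 0) hz1)
  obtain ⟨T', hT'mem, hT'crit⟩ : ∃ T' ∈ Ioo 0 z, deriv u T' = 0 := by
    have h9 : (0:ℝ) ∈ Ioo (deriv u z) (deriv u 0) := by
      rw [hvzneg, ← hcdef]
      exact ⟨by linarith, hc⟩
    have := intermediate_value_Ioo' (le_of_lt hz0) hccz
    obtain ⟨T', hT', hval⟩ := this h9
    exact ⟨T', hT', hval⟩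
  have hT'01 : T' ∈ Icc (0:ℝ) 1 :=
    ⟨le_of_lt hT'mem.1, le_trans (le_of_lt hT'mem.2) hz1⟩
  -- height at critical point
  have hξrel : κ * lam / 2 * (u T') ^ 2 = 1 - C := hcrit T' hT'01 hT'crit
  have hξpos : 0 < u T' := hupos T' hT'mem
  -- region membership
  have hreg : ∀ x ∈ Icc (0:ℝ) 1, (u x, deriv u x) ∈ Icc (-M) M ×ˢ Icc (-m) m := by
    intro x hx
    exact ⟨abs_le.1 (htraj x hx).1, abs_le.1 (htraj x hx).2⟩
  have hT'le1 : T' ≤ 1 := hT'01.2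
  have hT'pos : 0 < T' := hT'mem.1
  -- reflection about T'
  set a' := max 0 (2*T' - 1) with ha'def
  set b' := min (2*T') 1 with hb'def
  have hmap : ∀ x ∈ Icc a' b', 2*T' - x ∈ Icc (0:ℝ) 1 := by
    intro x hx
    constructor
    · have := hx.2
      have h8 : x ≤ 2*T' := le_trans this (min_le_left _ _)
      linarith
    · have := hx.1
      have h8 : 2*T' - 1 ≤ x := le_trans (le_max_right _ _) this
      linarith
  have hT'ab : T' ∈ Icc a' b' := by
    constructor
    · apply max_le (le_of_lt hT'pos)
      linarith
    · exact le_min (by linarith) hT'le1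
  have hrefl : ∀ x ∈ Icc a' b', u (2*T' - x) = u x := by
    have key := ode_uniq hκ hlam hM hm hT'ab
      (P := fun t => (u t, deriv u t))
      (Q := fun t => (u (2*T' - t), -deriv u (2*T' - t)))
      (fun x hx => curve_hasDeriv hsol x ⟨le_trans (le_max_left _ _) hx.1,
        le_trans hx.2 (min_le_right _ _)⟩)
      (fun x hx => curve_refl_hasDeriv hsol (hmap x hx))
      (fun x hx => hreg x ⟨le_trans (le_max_left _ _) hx.1, le_trans hx.2 (min_le_right _ _)⟩)
      (fun x hx => by
        have h8 := (htraj _ (hmap x hx)).1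
        have h9 := (htraj _ (hmap x hx)).2
        rw [abs_le] at h8 h9
        exact ⟨by simp only [mem_Icc]; exact ⟨h8.1, h8.2⟩,
               by simp only [mem_Icc]; exact ⟨by linarith [h9.2], by linarith [h9.1]⟩⟩)
      (by
        show (u T', deriv u T') = (u (2*T' - T'), -deriv u (2*T' - T'))
        have h2T : 2*T' - T' = T' := by ring
        rw [h2T, hT'crit, neg_zero])
    intro x hx
    have := key hx
    exact (congrArg Prod.fst this).symm
  -- z = 2 T'
  have hzT : z = 2*T' := by
    rcases lt_trichotomy (2*T') z with hlt | heqz | hgt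
    · exfalso
      have h2T1 : 2*T' ≤ 1 := le_trans (le_of_lt hlt) hz1
      have h0ab : (0:ℝ) ∈ Icc a' b' := by
        constructor
        · apply max_le (le_refl 0); linarith
        · apply le_min <;> linarith
      have := hrefl 0 h0ab
      rw [sub_zero, h0] at this
      have := hupos (2*T') ⟨by linarith, hlt⟩
      rw [‹u (2*T') = 0›] at this
      exact lt_irrefl 0 this
    · exact heqz.symm
    · exfalso
      have hzab : z ∈ Icc a' b' := by
        constructor
        · apply max_le (le_of_lt hz0)
          have : T' < z := hT'mem.2
          linarith
        · exact le_min (le_of_lt hgt) hz1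
      have h10 := hrefl z hzab
      rw [hzu] at h10
      have h11 : 2*T' - z ∈ Ioo 0 z := by
        constructor
        · linarith
        · have : T' < z := hT'mem.2
          linarith
      have := hupos _ h11
      rw [h10] at this
      exact lt_irrefl 0 this
  have h2T1 : 2*T' ≤ 1 := hzT ▸ hz1
  -- anti-periodicity on [z, 1]
  have hflip : ∀ x ∈ Icc (2*T') 1, u x = -u (x - 2*T') := by
    have hzin : 2*T' ∈ Icc (2*T') 1 := ⟨le_refl _, h2T1⟩
    have hmap2 : ∀ x ∈ Icc (2*T') 1, x - 2*T' ∈ Icc (0:ℝ) 1 := by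
      intro x hx
      exact ⟨by linarith [hx.1], by linarith [hx.2, hT'pos]⟩
    have key := ode_uniq hκ hlam hM hm hzin
      (P := fun t => (u t, deriv u t))
      (Q := fun t => (-u (t - 2*T'), -deriv u (t - 2*T')))
      (fun x hx => curve_hasDeriv hsol x ⟨by linarith [hx.1, hT'pos], hx.2⟩)
      (fun x hx => curve_flip_hasDeriv hsol (hmap2 x hx))
      (fun x hx => hreg x ⟨by linarith [hx.1, hT'pos], hx.2⟩)
      (fun x hx => by
        have h8 := (htraj _ (hmap2 x hx)).1
        have h9 := (htraj _ (hmap2 x hx)).2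
        rw [abs_le] at h8 h9
        exact ⟨by simp only [mem_Icc]; exact ⟨by linarith [h8.2], by linarith [h8.1]⟩,
               by simp only [mem_Icc]; exact ⟨by linarith [h9.2], by linarith [h9.1]⟩⟩)
      (by
        show (u (2*T'), deriv u (2*T')) = (-u (2*T' - 2*T'), -deriv u (2*T' - 2*T'))
        have h2T : 2*T' - 2*T' = (0:ℝ) := by ring
        rw [h2T, h0, neg_zero, ← hzT, hzu, hvzneg, hcdef])
    intro x hx
    have := key hx
    exact (congrArg Prod.fst this)
  -- iterated anti-periodicity
  have hiter : ∀ j : ℕ, ∀ x ∈ Icc (2*(j:ℝ)*T') 1, u x = (-1)^j * u (x - 2*(j:ℝ)*T') := by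
    intro j
    induction j with
    | zero => intro x _; norm_num
    | succ j ih =>
      intro x hx
      have hj1 : (0:ℝ) ≤ (j:ℝ) := Nat.cast_nonneg j
      have hcast : ((j:ℕ)+1 : ℕ) = (j:ℕ) + 1 := rfl
      have hxj : x ∈ Icc (2*(j:ℝ)*T') 1 := by
        refine ⟨?_, hx.2⟩
        have := hx.1
        push_cast at this ⊢
        nlinarith [hT'pos]
      have h12 := ih x hxj
      have hxin : x - 2*(j:ℝ)*T' ∈ Icc (2*T') 1 := by
        have h13 := hx.1
        push_cast at h13
        constructor
        · linarith
        · have := hx.2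
          nlinarith [hT'pos, hj1]
      have h14 := hflip _ hxin
      rw [h14] at h12
      rw [h12]
      have h15 : x - 2*(j:ℝ)*T' - 2*T' = x - 2*((j:ℝ)+1)*T' := by ring
      rw [h15]
      push_cast
      ring
  -- 1 is a multiple of 2T'
  set mm := Nat.floor (1 / (2*T')) with hmmdef
  have h2T'pos : 0 < 2*T' := by linarith
  have hmm1 : 2*(mm:ℝ)*T' ≤ 1 := by
    have := Nat.floor_le (by positivity : (0:ℝ) ≤ 1/(2*T'))
    rw [← hmmdef] at this
    rw [le_div_iff₀ h2T'pos] at this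
    linarith
  have hmm2 : 1 < 2*((mm:ℝ)+1)*T' := by
    have := Nat.lt_floor_add_one (1 / (2*T'))
    rw [← hmmdef] at this
    rw [div_lt_iff₀ h2T'pos] at this
    linarith
  have hmain : 1 = 2*(mm:ℝ)*T' := by
    have h16 : (1:ℝ) ∈ Icc (2*(mm:ℝ)*T') 1 := ⟨hmm1, le_refl 1⟩
    have h17 := hiter mm 1 h16
    rw [h1] at h17
    have h18 : u (1 - 2*(mm:ℝ)*T') = 0 := by
      have h19 : ((-1:ℝ))^mm ≠ 0 := pow_ne_zero _ (by norm_num)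
      field_simp at h17
      exact (mul_eq_zero.1 h17.symm).resolve_left h19
    rcases eq_or_lt_of_le hmm1 with h20 | h20
    · linarith [h20]
    · exfalso
      have h21 : 1 - 2*(mm:ℝ)*T' ∈ Ioo 0 z := by
        rw [hzT]
        constructor
        · linarith
        · linarith
      have := hupos _ h21
      rw [h18] at this
      exact lt_irrefl 0 this
  have hmmge1 : 1 ≤ mm := by
    by_contra h22
    push_neg at h22
    interval_cases mm
    norm_num at hmain
  -- the zero set
  have hzeroset : {x | x ∈ Ioo (0:ℝ) 1 ∧ u x = 0}
      = (fun j : ℕ => 2*(j:ℝ)*T') '' {j : ℕ | 1 ≤ j ∧ j < mm} := by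
    ext x
    constructor
    · rintro ⟨hx, hux⟩
      set j := Nat.floor (x / (2*T')) with hjdef
      have hj1 : 2*(j:ℝ)*T' ≤ x := by
        have := Nat.floor_le (div_nonneg (le_of_lt hx.1) (le_of_lt h2T'pos))
        rw [← hjdef, le_div_iff₀ h2T'pos] at this
        linarith
      have hj2 : x < 2*((j:ℝ)+1)*T' := by
        have := Nat.lt_floor_add_one (x / (2*T'))
        rw [← hjdef, div_lt_iff₀ h2T'pos] at this
        linarith
      have h23 : x ∈ Icc (2*(j:ℝ)*T') 1 := ⟨hj1, le_of_lt hx.2⟩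
      have h24 := hiter j x h23
      rw [hux] at h24
      have h25 : u (x - 2*(j:ℝ)*T') = 0 := by
        have h19 : ((-1:ℝ))^j ≠ 0 := pow_ne_zero _ (by norm_num)
        field_simp at h24
        exact (mul_eq_zero.1 h24.symm).resolve_left h19
      have h26 : x - 2*(j:ℝ)*T' = 0 := by
        by_contra h27
        have h28 : x - 2*(j:ℝ)*T' ∈ Ioo 0 z := by
          rw [hzT]
          constructor
          · cases' eq_or_lt_of_le hj1 with h29 h29
            · exact absurd (by linarith) h27
            · linarith
          · linarith
        have := hupos _ h28
        rw [h25] at this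
        exact lt_irrefl 0 this
      refine ⟨j, ⟨?_, ?_⟩, by show 2*(j:ℝ)*T' = x; linarith⟩
      · by_contra h30
        push_neg at h30
        interval_cases j
        · norm_num at h26
          linarith [hx.1]
      · have h31 : x < 1 := hx.2
        rw [hmain] at h31
        have h32 : (j:ℝ) < (mm:ℝ) := by
          have := h26
          nlinarith
        exact_mod_cast h32
    · rintro ⟨j, ⟨hj1, hj2⟩, rfl⟩
      have hj2' : (j:ℝ) < (mm:ℝ) := by exact_mod_cast hj2
      have hj1' : (1:ℝ) ≤ (j:ℝ) := by exact_mod_cast hj1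
      show 2*(j:ℝ)*T' ∈ Ioo (0:ℝ) 1 ∧ u (2*(j:ℝ)*T') = 0
      constructor
      · constructor
        · nlinarith [hT'pos]
        · rw [hmain]
          nlinarith [hT'pos]
      · have h33 : 2*(j:ℝ)*T' ∈ Icc (2*(j:ℝ)*T') 1 := by
          refine ⟨le_refl _, ?_⟩
          rw [hmain]
          nlinarith [hT'pos]
        have h34 := hiter j _ h33
        rw [sub_self, h0] at h34
        rw [h34]
        ring
  -- counting zeros: mm = n
  have hmmn : mm = n := by
    have hinj : Function.Injective (fun j : ℕ => 2*(j:ℝ)*T') := by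
      intro j1 j2 h35
      simp only at h35
      have : (j1:ℝ) = (j2:ℝ) := by
        have hT'ne : T' ≠ 0 := ne_of_gt hT'pos
        field_simp at h35
        tauto
      exact_mod_cast this
    have h36 : {j : ℕ | 1 ≤ j ∧ j < mm} = ↑(Finset.Ico 1 mm) := by
      ext j; simp [Finset.mem_Ico]
    have h37 : ((fun j : ℕ => 2*(j:ℝ)*T') '' {j : ℕ | 1 ≤ j ∧ j < mm}).ncard = mm - 1 := by
      rw [h36, ← Finset.coe_image, Set.ncard_coe_finset,
        Finset.card_image_of_injective _ hinj, Nat.card_Ico]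
    rw [hzeroset, h37] at hcount
    omega
  have hT'eq : T' = 1 / (2 * (n:ℝ)) := by
    have hnpos : (0:ℝ) < (n:ℝ) := by exact_mod_cast (by omega : 0 < n)
    rw [hmmn] at hmain
    rw [eq_div_iff (by positivity)]
    linear_combination (-1 : ℝ) * hmain
  -- final packaging
  have hT'z' : T' < z := hT'mem.2
  have hmono : StrictMonoOn u (Icc 0 T') := by
    apply strictMonoOn_of_deriv_pos (convex_Icc 0 T')
      (hcu.mono (Icc_subset_Icc (le_refl 0) hT'le1))
    intro x hx
    rw [interior_Icc] at hx
    have h40 := hanti (⟨le_of_lt hx.1, by linarith [hx.2, hT'z']⟩ : x ∈ Icc 0 z)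
      (⟨by linarith, by linarith⟩ : T' ∈ Icc 0 z) hx.2
    rw [hT'crit] at h40
    exact h40
  have hdpos : ∀ x ∈ Ico (0:ℝ) T', 0 < deriv u x := by
    intro x hx
    have h40 := hanti (⟨hx.1, by linarith [hx.2, hT'z']⟩ : x ∈ Icc 0 z)
      (⟨by linarith, by linarith⟩ : T' ∈ Icc 0 z) hx.2
    rw [hT'crit] at h40
    exact h40
  refine ⟨hc, hC, u T', hξpos, hξrel, ?_, ?_, ?_, ?_⟩
  · rw [← hT'eq]
  · rw [← hT'eq]; exact hmono
  · rw [← hT'eq]; exact hdpos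
  · rw [← hT'eq]; linarith


def Ghat (lam C θ : ℝ) : ℝ :=
  Real.sqrt (2 * (1 + (C - 1) * (1 - θ^2))^2 / (lam * (1 - θ^2) * (2 + (C - 1) * (1 - θ^2))))

lemma ghat_denom_pos {lam C θ : ℝ} (hlam : 0 < lam) (hC : 1 < C) (h0 : 0 ≤ θ) (h1 : θ < 1) :
    0 < lam * (1 - θ^2) * (2 + (C - 1) * (1 - θ^2)) := by
  have ha : 0 < 1 - θ^2 := by nlinarith
  have hs : 0 < (C - 1) * (1 - θ^2) := by nlinarith
  have : 0 < 2 + (C - 1) * (1 - θ^2) := by nlinarith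
  positivity

lemma ghat_pos {lam C θ : ℝ} (hlam : 0 < lam) (hC : 1 < C) (h0 : 0 ≤ θ) (h1 : θ < 1) :
    0 < Ghat lam C θ := by
  unfold Ghat
  apply Real.sqrt_pos.2
  apply div_pos _ (ghat_denom_pos hlam hC h0 h1)
  have ha : 0 < 1 - θ^2 := by nlinarith
  have hs : 0 < (C - 1) * (1 - θ^2) := by nlinarith
  positivity

lemma ghat_contOn {lam C b : ℝ} (hlam : 0 < lam) (hC : 1 < C) (hb0 : 0 ≤ b) (hb1 : b < 1) :
    ContinuousOn (Ghat lam C) (Icc 0 b) := by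
  unfold Ghat
  apply Real.continuous_sqrt.comp_continuousOn
  apply ContinuousOn.div
  · fun_prop
  · fun_prop
  · intro θ hθ
    have h8 : θ < 1 := lt_of_le_of_lt hθ.2 hb1
    exact ne_of_gt (ghat_denom_pos hlam hC hθ.1 h8)

lemma ghat_mono {lam C₁ C₂ θ : ℝ} (hlam : 0 < lam) (hC1 : 1 < C₁) (h12 : C₁ < C₂)
    (h0 : 0 ≤ θ) (h1 : θ < 1) : Ghat lam C₁ θ < Ghat lam C₂ θ := by
  unfold Ghat
  have ha : 0 < 1 - θ^2 := by nlinarith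
  have hs1 : 0 < (C₁ - 1) * (1 - θ^2) := by nlinarith
  have hs2 : 0 < (C₂ - 1) * (1 - θ^2) := by nlinarith
  have hslt : (C₁ - 1) * (1 - θ^2) < (C₂ - 1) * (1 - θ^2) := by nlinarith
  have hd1 := ghat_denom_pos hlam hC1 h0 h1
  have hd2 := ghat_denom_pos hlam (lt_trans hC1 h12) h0 h1
  apply Real.sqrt_lt_sqrt
  · apply div_nonneg _ (le_of_lt hd1)
    positivity
  · rw [div_lt_div_iff₀ hd1 hd2]
    set s₁ := (C₁ - 1) * (1 - θ^2)
    set s₂ := (C₂ - 1) * (1 - θ^2)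
    have key : (1 + s₂)^2 * (2 + s₁) - (1 + s₁)^2 * (2 + s₂)
        = (s₂ - s₁) * (3 + 2*(s₁ + s₂) + s₁*s₂) := by ring
    have hkeypos : 0 < (s₂ - s₁) * (3 + 2*(s₁ + s₂) + s₁*s₂) := by
      apply mul_pos (by linarith)
      nlinarith
    nlinarith [mul_pos hlam ha, mul_pos (mul_pos hlam ha) hkeypos]

/-- pointwise relation `deriv u t * Ghat lam C (u t / ξ) = ξ` from the energy identity -/
lemma pointwise_ghat {κ lam C ξ v w : ℝ} (hκ : κ < 0) (hlam : 0 < lam) (hC : 1 < C)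
    (hξ : 0 < ξ) (hv : 0 < v) (hw0 : 0 ≤ w) (hwξ : w < ξ)
    (energy : (1 + κ * v^2) * (C + κ*lam/2 * w^2)^2 = 1)
    (hξrel : κ * lam / 2 * ξ^2 = 1 - C) :
    v * Ghat lam C (w / ξ) = ξ := by
  set θ := w / ξ with hθdef
  have hθ0 : 0 ≤ θ := div_nonneg hw0 (le_of_lt hξ)
  have hθ1 : θ < 1 := by
    rw [hθdef, div_lt_one hξ]; exact hwξ
  have hw : w = ξ * θ := by
    rw [hθdef]; field_simp
  have ha : 0 < 1 - θ^2 := by nlinarith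
  have hdenom := ghat_denom_pos hlam hC hθ0 hθ1
  -- the value under the square root times v² equals ξ²
  have keyalg : v^2 * (2 * (1 + (C - 1) * (1 - θ^2))^2
      / (lam * (1 - θ^2) * (2 + (C - 1) * (1 - θ^2)))) = ξ^2 := by
    have hH : C + κ*lam/2 * w^2 = 1 + (C - 1) * (1 - θ^2) := by
      rw [hw]
      linear_combination θ^2 * hξrel
    rw [hH] at energy
    have e2' : κ * lam * ξ^2 = 2 * (1 - C) := by linear_combination 2 * hξrel
    have hκne : κ ≠ 0 := ne_of_lt hκ
    have goalκ : (v^2 * (2 * (1 + (C - 1) * (1 - θ^2))^2)) * κ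
        = (ξ^2 * (lam * (1 - θ^2) * (2 + (C - 1) * (1 - θ^2)))) * κ := by
      linear_combination 2 * energy - (1 - θ^2) * (2 + (C - 1) * (1 - θ^2)) * e2'
    have hcc := mul_right_cancel₀ hκne goalκ
    rw [show v^2 * (2 * (1 + (C - 1) * (1 - θ^2))^2
      / (lam * (1 - θ^2) * (2 + (C - 1) * (1 - θ^2))))
      = v^2 * (2 * (1 + (C - 1) * (1 - θ^2))^2)
      / (lam * (1 - θ^2) * (2 + (C - 1) * (1 - θ^2))) from by ring]
    rw [div_eq_iff (ne_of_gt hdenom)]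
    linarith [hcc]
  unfold Ghat
  rw [show v = Real.sqrt (v^2) from (Real.sqrt_sq (le_of_lt hv)).symm]
  rw [← Real.sqrt_mul (sq_nonneg v)]
  rw [keyalg]
  exact Real.sqrt_sq (le_of_lt hξ)

/-- time identity: position along the first quarter arch equals the Ghat integral -/
lemma time_identity {κ lam : ℝ} (hκ : κ < 0) (hlam : 0 < lam) {u : ℝ → ℝ} {T ξ C : ℝ}
    (hT1 : T ≤ 1) (hξ : 0 < ξ) (hC : 1 < C)
    (hd1 : ∀ y ∈ Icc (0:ℝ) 1, DifferentiableAt ℝ u y)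
    (hd2 : ∀ y ∈ Icc (0:ℝ) 1, DifferentiableAt ℝ (deriv u) y)
    (hrel : ∀ y ∈ Icc (0:ℝ) 1, (1 + κ * (deriv u y)^2) * (C + κ*lam/2 * (u y)^2)^2 = 1)
    (hξrel : κ * lam / 2 * ξ^2 = 1 - C)
    (h0 : u 0 = 0) (hmono : StrictMonoOn u (Icc 0 T)) (huT : u T = ξ)
    (hdpos : ∀ y ∈ Ico (0:ℝ) T, 0 < deriv u y)
    {x : ℝ} (hx : x ∈ Ico (0:ℝ) T) :
    x = ∫ θ in (0:ℝ)..(u x / ξ), Ghat lam C θ := by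
  have hx0 : 0 ≤ x := hx.1
  have hxT : x < T := hx.2
  have hT0 : 0 < T := lt_of_le_of_lt hx0 hxT
  have hsub01 : Icc (0:ℝ) x ⊆ Icc (0:ℝ) 1 :=
    Icc_subset_Icc (le_refl 0) (by linarith)
  have hmonoLe := hmono.monotoneOn
  have hux0 : 0 ≤ u x := by
    rw [← h0]
    exact hmonoLe ⟨le_refl 0, le_of_lt hT0⟩ ⟨hx0, le_of_lt hxT⟩ hx0
  have huxξ : u x < ξ := by
    rw [← huT]
    exact hmono ⟨hx0, le_of_lt hxT⟩ ⟨le_of_lt hT0, le_refl T⟩ hxT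
  set θ₀ := u x / ξ with hθ₀def
  have hθ₀0 : 0 ≤ θ₀ := div_nonneg hux0 (le_of_lt hξ)
  have hθ₀1 : θ₀ < 1 := by rw [hθ₀def, div_lt_one hξ]; exact huxξ
  have huIcc : (Set.uIcc (0:ℝ) x) = Icc (0:ℝ) x := uIcc_of_le hx0
  have hcu : ContinuousOn u (Icc (0:ℝ) x) :=
    fun y hy => ((hd1 y (hsub01 hy)).continuousAt).continuousWithinAt
  have hcv : ContinuousOn (deriv u) (Icc (0:ℝ) x) :=
    fun y hy => ((hd2 y (hsub01 hy)).continuousAt).continuousWithinAt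
  have himg : ∀ y ∈ Icc (0:ℝ) x, u y / ξ ∈ Icc (0:ℝ) θ₀ := by
    intro y hy
    have hy1 : y ∈ Icc (0:ℝ) T := ⟨hy.1, by linarith [hy.2]⟩
    have h8 : 0 ≤ u y := by
      rw [← h0]
      exact hmonoLe ⟨le_refl 0, le_of_lt hT0⟩ hy1 hy.1
    have h9 : u y ≤ u x := hmonoLe hy1 ⟨hx0, le_of_lt hxT⟩ hy.2
    exact ⟨div_nonneg h8 (le_of_lt hξ), by
      rw [hθ₀def]
      exact div_le_div_of_nonneg_right h9 (le_of_lt hξ)⟩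
  have hsub := intervalIntegral.integral_comp_smul_deriv''
    (f := fun t => u t / ξ) (f' := fun t => deriv u t / ξ) (g := Ghat lam C)
    (a := 0) (b := x)
    (by rw [huIcc]; exact hcu.div_const ξ)
    (by
      intro t ht
      rw [min_eq_left hx0, max_eq_right hx0] at ht
      have : HasDerivAt (fun s => u s / ξ) (deriv u t / ξ) t :=
        ((hd1 t (hsub01 (Ioo_subset_Icc_self ht))).hasDerivAt).div_const ξ
      exact this.hasDerivWithinAt)
    (by rw [huIcc]; exact hcv.div_const ξ)
    (by
      rw [huIcc]
      apply (ghat_contOn hlam hC hθ₀0 hθ₀1).mono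
      rintro y ⟨t, ht, rfl⟩
      exact himg t ht)
  have heval : (fun t => u t / ξ) 0 = 0 := by simp [h0]
  have heval2 : (fun t => u t / ξ) x = θ₀ := rfl
  rw [h0, zero_div, ← hθ₀def] at hsub
  rw [← hsub]
  have hcong : ∀ t ∈ (Set.uIcc (0:ℝ) x),
      (deriv u t / ξ) • ((Ghat lam C) ∘ (fun s => u s / ξ)) t = (1:ℝ) := by
    intro t ht
    rw [huIcc] at ht
    have htT : t ∈ Ico (0:ℝ) T := ⟨ht.1, lt_of_le_of_lt ht.2 hxT⟩
    have hv := hdpos t htT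
    have ht01 : t ∈ Icc (0:ℝ) 1 := hsub01 ht
    have h8 : 0 ≤ u t := by
      rw [← h0]
      exact hmonoLe ⟨le_refl 0, le_of_lt hT0⟩ ⟨ht.1, by linarith [ht.2]⟩ ht.1
    have h9 : u t < ξ := by
      rw [← huT]
      exact hmono ⟨ht.1, by linarith [ht.2]⟩ ⟨le_of_lt hT0, le_refl T⟩ (by linarith [ht.2])
    have hp := pointwise_ghat hκ hlam hC hξ hv h8 h9 (hrel t ht01) hξrel
    simp only [smul_eq_mul, Function.comp]
    field_simp
    linarith [hp]
  rw [intervalIntegral.integral_congr hcong]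
  simp


lemma bounds_exist {κ lam : ℝ} {u : ℝ → ℝ} (hsol : SolODE κ lam u 0 1) :
    ∃ M m : ℝ, 0 ≤ M ∧ 0 < 1 + κ * m ^ 2 ∧
      ∀ x ∈ Icc (0:ℝ) 1, |u x| ≤ M ∧ |deriv u x| ≤ m := by
  have hcu : ContinuousOn (fun x => |u x|) (Icc (0:ℝ) 1) :=
    fun x hx => (((hsol.1 x hx).continuousAt).continuousWithinAt).abs
  have hcv : ContinuousOn (fun x => |deriv u x|) (Icc (0:ℝ) 1) :=
    fun x hx => (((hsol.2.1 x hx).continuousAt).continuousWithinAt).abs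
  have hne : (Icc (0:ℝ) 1).Nonempty := ⟨0, ⟨le_refl 0, zero_le_one⟩⟩
  obtain ⟨xM, hxM, hmaxM⟩ := isCompact_Icc.exists_isMaxOn hne hcu
  obtain ⟨xm, hxm, hmaxm⟩ := isCompact_Icc.exists_isMaxOn hne hcv
  refine ⟨|u xM|, |deriv u xm|, abs_nonneg _, ?_, ?_⟩
  · rw [sq_abs]
    exact hsol.2.2.2.1 xm hxm
  · intro x hx
    exact ⟨hmaxM hx, hmaxm hx⟩

lemma half_mem_Icc : (1/2 : ℝ) < 1 := by norm_num

lemma no_lt {κ lam : ℝ} (hκ : κ < 0) (hlam : 0 < lam) {T : ℝ} (hT0 : 0 < T) (hT1 : T ≤ 1)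
    {u₁ u₂ : ℝ → ℝ} {C₁ C₂ ξ₁ ξ₂ : ℝ}
    (hC1 : 1 < C₁) (hC2 : 1 < C₂) (h12 : C₁ < C₂)
    (hξ1 : 0 < ξ₁) (hξ2 : 0 < ξ₂)
    (hd11 : ∀ y ∈ Icc (0:ℝ) 1, DifferentiableAt ℝ u₁ y)
    (hd12 : ∀ y ∈ Icc (0:ℝ) 1, DifferentiableAt ℝ (deriv u₁) y)
    (hrel1 : ∀ y ∈ Icc (0:ℝ) 1, (1 + κ * (deriv u₁ y)^2) * (C₁ + κ*lam/2 * (u₁ y)^2)^2 = 1)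
    (hξrel1 : κ * lam / 2 * ξ₁^2 = 1 - C₁)
    (h01 : u₁ 0 = 0) (hmono1 : StrictMonoOn u₁ (Icc 0 T)) (huT1 : u₁ T = ξ₁)
    (hdpos1 : ∀ y ∈ Ico (0:ℝ) T, 0 < deriv u₁ y)
    (hd21 : ∀ y ∈ Icc (0:ℝ) 1, DifferentiableAt ℝ u₂ y)
    (hd22 : ∀ y ∈ Icc (0:ℝ) 1, DifferentiableAt ℝ (deriv u₂) y)
    (hrel2 : ∀ y ∈ Icc (0:ℝ) 1, (1 + κ * (deriv u₂ y)^2) * (C₂ + κ*lam/2 * (u₂ y)^2)^2 = 1)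
    (hξrel2 : κ * lam / 2 * ξ₂^2 = 1 - C₂)
    (h02 : u₂ 0 = 0) (hmono2 : StrictMonoOn u₂ (Icc 0 T)) (huT2 : u₂ T = ξ₂)
    (hdpos2 : ∀ y ∈ Ico (0:ℝ) T, 0 < deriv u₂ y) : False := by
  have hcu1 : ContinuousOn u₁ (Icc (0:ℝ) T) := fun y hy =>
    ((hd11 y ⟨hy.1, le_trans hy.2 hT1⟩).continuousAt).continuousWithinAt
  have hcu2 : ContinuousOn u₂ (Icc (0:ℝ) T) := fun y hy =>
    ((hd21 y ⟨hy.1, le_trans hy.2 hT1⟩).continuousAt).continuousWithinAt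
  -- point where u₁ = ξ₁/2
  obtain ⟨x₁, hx₁, hux₁⟩ : ∃ x₁ ∈ Ico (0:ℝ) T, u₁ x₁ = ξ₁/2 := by
    have := intermediate_value_Ico (le_of_lt hT0) hcu1
    rw [h01, huT1] at this
    have h8 : ξ₁/2 ∈ Ico (0:ℝ) ξ₁ := ⟨by linarith, by linarith⟩
    obtain ⟨x₁, hmem, hval⟩ := this h8
    exact ⟨x₁, hmem, hval⟩
  have id1 : x₁ = ∫ θ in (0:ℝ)..(1/2:ℝ), Ghat lam C₁ θ := by
    have := time_identity hκ hlam hT1 hξ1 hC1 hd11 hd12 hrel1 hξrel1 h01 hmono1 huT1 hdpos1 hx₁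
    rw [hux₁] at this
    rw [this]
    have hne : ξ₁ ≠ 0 := ne_of_gt hξ1
    congr 1
    field_simp
  -- the gap
  have hint1h : IntervalIntegrable (Ghat lam C₁) MeasureTheory.volume 0 (1/2) := by
    apply ContinuousOn.intervalIntegrable
    rw [uIcc_of_le (by norm_num : (0:ℝ) ≤ 1/2)]
    exact ghat_contOn hlam hC1 (by norm_num) (by norm_num)
  have hint2h : IntervalIntegrable (Ghat lam C₂) MeasureTheory.volume 0 (1/2) := by
    apply ContinuousOn.intervalIntegrable
    rw [uIcc_of_le (by norm_num : (0:ℝ) ≤ 1/2)]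
    exact ghat_contOn hlam hC2 (by norm_num) (by norm_num)
  set Δ : ℝ := ∫ θ in (0:ℝ)..(1/2:ℝ), (Ghat lam C₂ θ - Ghat lam C₁ θ) with hΔdef
  have hΔpos : 0 < Δ := by
    rw [hΔdef]
    apply intervalIntegral_pos_of_pos_on (hint2h.sub hint1h)
    · intro θ hθ
      have := ghat_mono hlam hC1 h12 (le_of_lt hθ.1) (by linarith [hθ.2] : θ < 1)
      linarith
    · norm_num
  have hΔeq : Δ = (∫ θ in (0:ℝ)..(1/2:ℝ), Ghat lam C₂ θ)
      - ∫ θ in (0:ℝ)..(1/2:ℝ), Ghat lam C₁ θ := by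
    rw [hΔdef, intervalIntegral.integral_sub hint2h hint1h]
  -- choice of x
  set x : ℝ := max ((x₁ + T)/2) (T - Δ/2) with hxdef
  have hxmem : x ∈ Ico (0:ℝ) T := by
    constructor
    · apply le_trans _ (le_max_left _ _)
      linarith [hx₁.1]
    · apply max_lt
      · linarith [hx₁.2]
      · linarith
  set θ₀ : ℝ := u₁ x / ξ₁ with hθ₀def
  have hux0 : 0 ≤ u₁ x := by
    rw [← h01]
    exact hmono1.monotoneOn ⟨le_refl 0, le_of_lt hT0⟩ ⟨hxmem.1, le_of_lt hxmem.2⟩ hxmem.1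
  have hθ₀0 : 0 ≤ θ₀ := div_nonneg hux0 (le_of_lt hξ1)
  have hθ₀1 : θ₀ < 1 := by
    rw [hθ₀def, div_lt_one hξ1, ← huT1]
    exact hmono1 ⟨hxmem.1, le_of_lt hxmem.2⟩ ⟨le_of_lt hT0, le_refl T⟩ hxmem.2
  have hxx₁ : x₁ ≤ x := le_trans (by linarith [hx₁.2]) (le_max_left ((x₁ + T)/2) (T - Δ/2))
  have hθ₀half : (1/2:ℝ) ≤ θ₀ := by
    have h9 : u₁ x₁ ≤ u₁ x :=
      hmono1.monotoneOn ⟨hx₁.1, le_of_lt hx₁.2⟩ ⟨hxmem.1, le_of_lt hxmem.2⟩ hxx₁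
    rw [hux₁] at h9
    rw [hθ₀def, le_div_iff₀ hξ1]
    linarith
  have id2 : x = ∫ θ in (0:ℝ)..θ₀, Ghat lam C₁ θ :=
    time_identity hκ hlam hT1 hξ1 hC1 hd11 hd12 hrel1 hξrel1 h01 hmono1 huT1 hdpos1 hxmem
  -- point where u₂ = ξ₂ θ₀
  obtain ⟨x₂, hx₂, hux₂⟩ : ∃ x₂ ∈ Ico (0:ℝ) T, u₂ x₂ = ξ₂ * θ₀ := by
    have := intermediate_value_Ico (le_of_lt hT0) hcu2
    rw [h02, huT2] at this
    have h8 : ξ₂ * θ₀ ∈ Ico (0:ℝ) ξ₂ :=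
      ⟨mul_nonneg (le_of_lt hξ2) hθ₀0, by nlinarith⟩
    obtain ⟨x₂, hmem, hval⟩ := this h8
    exact ⟨x₂, hmem, hval⟩
  have id3 : x₂ = ∫ θ in (0:ℝ)..θ₀, Ghat lam C₂ θ := by
    have := time_identity hκ hlam hT1 hξ2 hC2 hd21 hd22 hrel2 hξrel2 h02 hmono2 huT2 hdpos2 hx₂
    rw [hux₂] at this
    rw [this]
    have hne : ξ₂ ≠ 0 := ne_of_gt hξ2
    congr 1
    field_simp
  -- integrability on [1/2, θ₀]
  have hconth1 : ContinuousOn (Ghat lam C₁) (Icc 0 θ₀) := ghat_contOn hlam hC1 hθ₀0 hθ₀1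
  have hconth2 : ContinuousOn (Ghat lam C₂) (Icc 0 θ₀) := ghat_contOn hlam hC2 hθ₀0 hθ₀1
  have hint1t : IntervalIntegrable (Ghat lam C₁) MeasureTheory.volume (1/2) θ₀ := by
    apply ContinuousOn.intervalIntegrable
    rw [uIcc_of_le hθ₀half]
    exact hconth1.mono (Icc_subset_Icc (by norm_num) (le_refl _))
  have hint2t : IntervalIntegrable (Ghat lam C₂) MeasureTheory.volume (1/2) θ₀ := by
    apply ContinuousOn.intervalIntegrable
    rw [uIcc_of_le hθ₀half]
    exact hconth2.mono (Icc_subset_Icc (by norm_num) (le_refl _))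
  have hsplit1 : (∫ θ in (0:ℝ)..(1/2:ℝ), Ghat lam C₁ θ)
      + (∫ θ in (1/2:ℝ)..θ₀, Ghat lam C₁ θ) = ∫ θ in (0:ℝ)..θ₀, Ghat lam C₁ θ :=
    intervalIntegral.integral_add_adjacent_intervals hint1h hint1t
  have hsplit2 : (∫ θ in (0:ℝ)..(1/2:ℝ), Ghat lam C₂ θ)
      + (∫ θ in (1/2:ℝ)..θ₀, Ghat lam C₂ θ) = ∫ θ in (0:ℝ)..θ₀, Ghat lam C₂ θ :=
    intervalIntegral.integral_add_adjacent_intervals hint2h hint2t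
  have htail : (∫ θ in (1/2:ℝ)..θ₀, Ghat lam C₁ θ) ≤ ∫ θ in (1/2:ℝ)..θ₀, Ghat lam C₂ θ := by
    apply intervalIntegral.integral_mono_on hθ₀half hint1t hint2t
    intro θ hθ
    exact le_of_lt (ghat_mono hlam hC1 h12 (by linarith [hθ.1]) (lt_of_le_of_lt hθ.2 hθ₀1))
  have hxge : T - Δ/2 ≤ x := le_max_right _ _
  have hx₂T : x₂ < T := hx₂.2
  linarith [id2, id3, hsplit1, hsplit2, htail, hΔeq, hΔpos, hxge, hx₂T, id1]


theorem stmt12 (κ lam : ℝ) (hκ : κ < 0) (hlam : 0 < lam) (n : ℕ) (hn : 1 ≤ n)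
    (u₁ u₂ : ℝ → ℝ) (hu₁ : SPlus κ lam n u₁) (hu₂ : SPlus κ lam n u₂) :
    ∀ x ∈ Set.Icc (0 : ℝ) 1, u₁ x = u₂ x := by
  have hsol1 : SolODE κ lam u₁ 0 1 := hu₁.1.1
  have hsol2 : SolODE κ lam u₂ 0 1 := hu₂.1.1
  have h01 : u₁ 0 = 0 := hu₁.1.2.1
  have h02 : u₂ 0 = 0 := hu₂.1.2.1
  -- common bounds
  obtain ⟨M₁, m₁, hM₁, hm₁, htraj₁⟩ := bounds_exist hsol1
  obtain ⟨M₂, m₂, hM₂, hm₂, htraj₂⟩ := bounds_exist hsol2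
  set M := max M₁ M₂ with hMdef
  set m := max m₁ m₂ with hmdef
  have hM : 0 ≤ M := le_trans hM₁ (le_max_left _ _)
  have hm : 0 < 1 + κ * m ^ 2 := by
    rcases max_cases m₁ m₂ with ⟨h8, _⟩ | ⟨h8, _⟩ <;> rw [hmdef, h8]
    · exact hm₁
    · exact hm₂
  have htraj1 : ∀ x ∈ Icc (0:ℝ) 1, |u₁ x| ≤ M ∧ |deriv u₁ x| ≤ m := fun x hx =>
    ⟨le_trans (htraj₁ x hx).1 (le_max_left _ _), le_trans (htraj₁ x hx).2 (le_max_left _ _)⟩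
  have htraj2 : ∀ x ∈ Icc (0:ℝ) 1, |u₂ x| ≤ M ∧ |deriv u₂ x| ≤ m := fun x hx =>
    ⟨le_trans (htraj₂ x hx).1 (le_max_right _ _), le_trans (htraj₂ x hx).2 (le_max_right _ _)⟩
  -- structure of both solutions
  obtain ⟨hc1, hC1, ξ₁, hξ1, hξrel1, huT1, hmono1, hdpos1, hT1⟩ :=
    structure_lemma hκ hlam hn hu₁ hM hm htraj1
  obtain ⟨hc2, hC2, ξ₂, hξ2, hξrel2, huT2, hmono2, hdpos2, hT2⟩ :=
    structure_lemma hκ hlam hn hu₂ hM hm htraj2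
  set C₁ := En κ lam u₁ 0 with hC₁def
  set C₂ := En κ lam u₂ 0 with hC₂def
  have hrel1 := energy_rel hκ hsol1 h01
  have hrel2 := energy_rel hκ hsol2 h02
  set T : ℝ := 1 / (2 * (n:ℝ)) with hTdef
  have hnpos : (0:ℝ) < (n:ℝ) := by exact_mod_cast (by omega : 0 < n)
  have hT0 : 0 < T := by rw [hTdef]; positivity
  -- equal energies
  have hCeq : C₁ = C₂ := by
    by_contra h8
    rcases lt_or_gt_of_ne h8 with h9 | h9
    · exact no_lt hκ hlam hT0 hT1 hC1 hC2 h9 hξ1 hξ2 hsol1.1 hsol1.2.1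
        (fun y hy => (hrel1 y hy).2) hξrel1 h01 hmono1 huT1 hdpos1
        hsol2.1 hsol2.2.1 (fun y hy => (hrel2 y hy).2) hξrel2 h02 hmono2 huT2 hdpos2
    · exact no_lt hκ hlam hT0 hT1 hC2 hC1 h9 hξ2 hξ1 hsol2.1 hsol2.2.1
        (fun y hy => (hrel2 y hy).2) hξrel2 h02 hmono2 huT2 hdpos2
        hsol1.1 hsol1.2.1 (fun y hy => (hrel1 y hy).2) hξrel1 h01 hmono1 huT1 hdpos1
  -- equal initial slopes
  have mem01 : (0:ℝ) ∈ Icc (0:ℝ) 1 := ⟨le_refl 0, zero_le_one⟩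
  have hceq : deriv u₁ 0 = deriv u₂ 0 := by
    have e1 := (hrel1 0 mem01).2
    have e2 := (hrel2 0 mem01).2
    rw [h01] at e1
    rw [h02] at e2
    rw [← hC₁def] at e1
    rw [← hC₂def, ← hCeq] at e2
    have hCne : (C₁ + κ * lam / 2 * 0 ^ 2) ^ 2 ≠ 0 := by
      have : C₁ + κ * lam / 2 * 0 ^ 2 = C₁ := by ring
      rw [this]
      positivity
    have h5 := mul_right_cancel₀ hCne (e1.trans e2.symm)
    have h6 : (deriv u₁ 0) ^ 2 = (deriv u₂ 0) ^ 2 := by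
      have : κ * (deriv u₁ 0) ^ 2 = κ * (deriv u₂ 0) ^ 2 := by linarith
      exact mul_left_cancel₀ (ne_of_lt hκ) this
    have h7 : (deriv u₁ 0 - deriv u₂ 0) * (deriv u₁ 0 + deriv u₂ 0) = 0 := by
      nlinarith [h6]
    rcases mul_eq_zero.1 h7 with h8 | h8
    · linarith
    · linarith
  -- global uniqueness
  have key := ode_uniq hκ hlam hM hm mem01
    (P := fun t => (u₁ t, deriv u₁ t)) (Q := fun t => (u₂ t, deriv u₂ t))
    (curve_hasDeriv hsol1) (curve_hasDeriv hsol2)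
    (fun x hx => ⟨abs_le.1 (htraj1 x hx).1, abs_le.1 (htraj1 x hx).2⟩)
    (fun x hx => ⟨abs_le.1 (htraj2 x hx).1, abs_le.1 (htraj2 x hx).2⟩)
    (by
      show (u₁ 0, deriv u₁ 0) = (u₂ 0, deriv u₂ 0)
      rw [h01, h02, hceq])
  intro x hx
  exact congrArg Prod.fst (key hx)
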